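/- For every natural number n ≥ 1, ∫_0^1 (1 − ((1−z)/2)^n − ((1+z)/2)^n) / (1 − z²) dz = (1/2)·H_{n−1}, where H_m = ∑_{k=1}^m 1/k. -/

import Mathlib

/-- The `n`-th harmonic number `∑_{k=1}^n 1/k`. -/
noncomputable def H (n : ℕ) : ℝ := ∑ k ∈ Finset.range n, (1 : ℝ) / (k + 1)

lemma key_sum (a b : ℝ) (hab : a + b = 1) (m : ℕ) :
    (∑ j ∈ Finset.range m, (a ^ j + b ^ j)) * (a * b) = 1 - a ^ (m + 1) - b ^ (m + 1) := by
  induction m with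
  | zero => simp only [Finset.sum_range_zero, zero_mul, zero_add, pow_one]; linarith
  | succ m ih =>
      rw [Finset.sum_range_succ]
      linear_combination ih + (a ^ (m + 1) + b ^ (m + 1)) * hab

lemma term_int (j : ℕ) :
    ∫ z in (0:ℝ)..1, (((1 - z)/2) ^ j + ((1 + z)/2) ^ j) = 2 / (j + 1) := by
  have hj : (j : ℝ) + 1 ≠ 0 := by positivity
  have hF : ∀ z : ℝ, HasDerivAt
      (fun z : ℝ => 2/((j:ℝ)+1) * (((1+z)/2)^(j+1) - ((1-z)/2)^(j+1)))
      (((1 - z)/2) ^ j + ((1 + z)/2) ^ j) z := by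
    intro z
    have h1 : HasDerivAt (fun z : ℝ => (1+z)/2) (1/2) z :=
      ((hasDerivAt_id z).const_add 1).div_const 2
    have h2 : HasDerivAt (fun z : ℝ => (1-z)/2) (-1/2) z :=
      ((hasDerivAt_id z).const_sub 1).div_const 2
    have h := ((h1.fun_pow (j+1)).fun_sub (h2.fun_pow (j+1))).const_mul (2/((j:ℝ)+1))
    refine h.congr_deriv ?_
    push_cast
    field_simp
    ring
  rw [intervalIntegral.integral_eq_sub_of_hasDerivAt (fun z _ => hF z)
    (by apply Continuous.intervalIntegrable; continuity)]
  norm_num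

theorem stmt15 (n : ℕ) (hn : 1 ≤ n) :
    ∫ z in (0:ℝ)..1, (1 - ((1 - z)/2) ^ n - ((1 + z)/2) ^ n) / (1 - z^2)
      = (1/2) * H (n - 1) := by
  obtain ⟨m, rfl⟩ : ∃ m, n = m + 1 := ⟨n - 1, (Nat.succ_pred_eq_of_pos hn).symm⟩
  simp only [Nat.add_sub_cancel]
  have hcong : ∫ z in (0:ℝ)..1, (1 - ((1 - z)/2) ^ (m+1) - ((1 + z)/2) ^ (m+1)) / (1 - z^2)
      = ∫ z in (0:ℝ)..1, (1/4) * ∑ j ∈ Finset.range m, (((1 - z)/2) ^ j + ((1 + z)/2) ^ j) := by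
    apply intervalIntegral.integral_congr_ae
    have h1 : ∀ᵐ x : ℝ, x ≠ 1 := by
      have : MeasureTheory.volume ({1} : Set ℝ) = 0 := Real.volume_singleton
      simp [MeasureTheory.ae_iff, this]
    filter_upwards [h1] with x hx hmem
    rw [Set.uIoc_of_le (by norm_num : (0:ℝ) ≤ 1)] at hmem
    obtain ⟨hx0, hx1⟩ := hmem
    have hxlt : x < 1 := lt_of_le_of_ne hx1 hx
    have hx2 : 1 - x ^ 2 ≠ 0 := by nlinarith
    rw [div_eq_iff hx2]
    linear_combination -(key_sum ((1-x)/2) ((1+x)/2) (by ring) m)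
  rw [hcong, intervalIntegral.integral_const_mul,
    intervalIntegral.integral_finset_sum (fun j _ => by
      apply Continuous.intervalIntegrable; continuity)]
  have : ∀ j ∈ Finset.range m, (∫ z in (0:ℝ)..1, (((1 - z)/2) ^ j + ((1 + z)/2) ^ j)) = 2/((j:ℝ)+1) :=
    fun j _ => term_int j
  rw [Finset.sum_congr rfl this, H, Finset.mul_sum, Finset.mul_sum]
  exact Finset.sum_congr rfl fun j _ => by ring
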